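/- For a one-dimensional double integrator with bounded deceleration, the set of inevitable collision states with respect to free space F = (-∞, w) (a wall at position w) is exactly {(p, v) : v > 0 and p + v²/(2a_max) ≥ w} ∪ {(p,v) : p ≥ w}, i.e., states whose minimum stopping distance overshoots the wall. -/

import Mathlib

/-- For a one-dimensional double integrator `p'' = u`, `|u| ≤ a`, with free
space `F = {(p,v) : p < w}` (a wall at `w`), the set of inevitable collision
states is exactly
`{(p,v) : p ≥ w} ∪ {(p,v) : v > 0 ∧ p + v²/(2a) ≥ w}`:
states whose minimum stopping distance overshoots the wall. A state is in
`ICS(F)` iff there is a time horizon `T ≥ 0` such that every admissible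
trajectory `(pos, vel, u)` starting at `(p, v)` reaches position `≥ w` by
time `T`. -/
theorem stmt_15 (a w : ℝ) (ha : 0 < a) (p v : ℝ) :
    (∃ T : ℝ, 0 ≤ T ∧ ∀ pos vel u : ℝ → ℝ,
      pos 0 = p → vel 0 = v →
      (∀ t, HasDerivAt pos (vel t) t) →
      (∀ t, HasDerivAt vel (u t) t) →
      (∀ t, |u t| ≤ a) →
      ∃ t, 0 ≤ t ∧ t ≤ T ∧ w ≤ pos t) ↔
    (w ≤ p ∨ (0 < v ∧ w ≤ p + v ^ 2 / (2 * a))) := by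
  constructor
  · rintro ⟨T, hT, h⟩
    by_contra hc
    push_neg at hc
    obtain ⟨hpw, hv⟩ := hc
    by_cases hv0 : 0 < v
    · have hvw := hv hv0
      have hpos : ∀ t : ℝ, HasDerivAt (fun t => p + v * t - a / 2 * t ^ 2)
          (v - a * t) t := by
        intro t
        have h1 : HasDerivAt (fun t : ℝ => p + v * t - a / 2 * t ^ 2)
            (v * 1 - a / 2 * (↑2 * t ^ 1)) t :=
          (((hasDerivAt_id t).const_mul v).const_add p).sub
            ((hasDerivAt_pow 2 t).const_mul (a / 2))
        convert h1 using 1; push_cast; ring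
      have hvel : ∀ t : ℝ, HasDerivAt (fun t => v - a * t) (-a) t := by
        intro t
        have h1 : HasDerivAt (fun t : ℝ => v - a * t) (0 - a * 1) t :=
          (hasDerivAt_const t v).sub ((hasDerivAt_id t).const_mul a)
        convert h1 using 1; ring
      obtain ⟨t, ht0, htT, hwt⟩ := h _ _ (fun _ => -a) (by simp) (by simp)
        hpos hvel (fun t => by rw [abs_neg, abs_of_pos ha])
      have h2 : v ^ 2 < (w - p) * (2 * a) :=
        (div_lt_iff₀ (by positivity)).mp (by linarith)
      nlinarith [sq_nonneg (a * t - v), mul_le_mul_of_nonneg_left hwt ha.le]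
    · push_neg at hv0
      obtain ⟨t, ht0, htT, hwt⟩ := h (fun t => p + v * t) (fun _ => v) (fun _ => 0)
        (by simp) rfl
        (fun t => by simpa using ((hasDerivAt_id t).const_mul v).const_add p)
        (fun t => hasDerivAt_const t v)
        (fun t => by simp [ha.le])
      nlinarith [mul_nonpos_of_nonpos_of_nonneg hv0 ht0]
  · rintro (h | ⟨hv, hw⟩)
    · exact ⟨0, le_refl 0, fun pos vel u hp _ _ _ _ =>
        ⟨0, le_refl 0, le_refl 0, hp ▸ h⟩⟩
    · refine ⟨v / a, by positivity, ?_⟩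
      intro pos vel u hp0 hv0 hpd hvd hu
      refine ⟨v / a, by positivity, le_refl _, ?_⟩
      -- velocity bound: vel t ≥ v - a t for t ≥ 0
      have hg : Monotone (fun t => vel t + a * t) := by
        apply monotone_of_deriv_nonneg
        · exact fun t => ((hvd t).add ((hasDerivAt_id t).const_mul a)).differentiableAt
        · intro t
          have hd : HasDerivAt (fun t => vel t + a * t) (u t + a * 1) t :=
            (hvd t).add ((hasDerivAt_id t).const_mul a)
          rw [hd.deriv]
          have := abs_le.mp (hu t)
          linarith [this.1]
      have hvelb : ∀ t : ℝ, 0 ≤ t → v - a * t ≤ vel t := by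
        intro t ht
        have := hg ht
        simp only [mul_zero, add_zero, hv0] at this
        linarith
      -- f t = pos t - (p + v t - a/2 t²) is monotone on [0,∞)
      set f : ℝ → ℝ := fun t => pos t - (p + v * t - a / 2 * t ^ 2) with hf
      have hfd : ∀ t : ℝ, HasDerivAt f (vel t - (v - a * t)) t := by
        intro t
        have h1 : HasDerivAt (fun t : ℝ => p + v * t - a / 2 * t ^ 2)
            (v * 1 - a / 2 * (↑2 * t ^ 1)) t :=
          (((hasDerivAt_id t).const_mul v).const_add p).sub
            ((hasDerivAt_pow 2 t).const_mul (a / 2))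
        have h2 := (hpd t).sub h1
        exact h2.congr_deriv (by push_cast; ring)
      have hfm : MonotoneOn f (Set.Ici (0 : ℝ)) := by
        apply monotoneOn_of_deriv_nonneg (convex_Ici 0)
        · exact fun t _ => (hfd t).differentiableAt.continuousAt.continuousWithinAt
        · exact fun t _ => ((hfd t).differentiableAt).differentiableWithinAt
        · intro t ht
          rw [interior_Ici] at ht
          rw [(hfd t).deriv]
          have := hvelb t (le_of_lt ht)
          linarith
      have hva : (0:ℝ) ≤ v / a := by positivity
      have hf0 : f 0 = 0 := by simp [hf, hp0]
      have := hfm (Set.self_mem_Ici) (Set.mem_Ici.mpr hva) hva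
      rw [hf0] at this
      have hkey : p + v * (v / a) - a / 2 * (v / a) ^ 2 ≤ pos (v / a) := by
        simp only [hf] at this; linarith
      have hne : a ≠ 0 := ne_of_gt ha
      have heq : p + v * (v / a) - a / 2 * (v / a) ^ 2 = p + v ^ 2 / (2 * a) := by
        field_simp; ring
      linarith [heq ▸ hkey]
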